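/- Let η ∈ ℝ, η ≠ 0, and let u, v : U → ℝ be smooth functions on an open set U ⊆ ℝ² satisfying the Pohlmeyer–Lund–Regge type system u_{xt} = 2uv·u_x − u, v_{xt} = −2uv·v_x − v on U. Define F₁₁ = η(u_x + v_x), F₂₁ = η², F₃₁ = η(u_x − v_x), F₁₂ = (1/η)(v − u), F₂₂ = −1/η² − 2uv, F₃₂ = −(1/η)(u + v). Then on U the structure equations with δ = 1 hold: −∂_t F₁₁ + ∂_x F₁₂ = F₃₁F₂₂ − F₃₂F₂₁, −∂_t F₂₁ + ∂_x F₂₂ = F₁₁F₃₂ − F₁₂F₃₁, −∂_t F₃₁ + ∂_x F₃₂ = F₁₁F₂₂ − F₁₂F₂₁; hence this system describes pseudospherical surfaces with these associated functions. -/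

import Mathlib

open Real

/-- Partial derivative in the `x` direction of a function on the `(x, t)` plane. -/
noncomputable def pdx (f : ℝ × ℝ → ℝ) (p : ℝ × ℝ) : ℝ := fderiv ℝ f p (1, 0)

/-- Partial derivative in the `t` direction of a function on the `(x, t)` plane. -/
noncomputable def pdt (f : ℝ × ℝ → ℝ) (p : ℝ × ℝ) : ℝ := fderiv ℝ f p (0, 1)

/-- The structure equations of a surface of constant Gaussian curvature `-δ`. -/
def StructEqs (δ : ℝ) (U : Set (ℝ × ℝ)) (F11 F12 F21 F22 F31 F32 : ℝ × ℝ → ℝ) : Prop :=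
  ∀ p ∈ U,
    -(pdt F11 p) + pdx F12 p = F31 p * F22 p - F32 p * F21 p ∧
    -(pdt F21 p) + pdx F22 p = F11 p * F32 p - F12 p * F31 p ∧
    -(pdt F31 p) + pdx F32 p = δ * (F11 p * F22 p - F12 p * F21 p)

private lemma diffAt_pdx {f : ℝ × ℝ → ℝ} {U : Set (ℝ × ℝ)} (hU : IsOpen U)
    (hf : ContDiffOn ℝ (⊤ : ℕ∞) f U) {p : ℝ × ℝ} (hp : p ∈ U) :
    DifferentiableAt ℝ (pdx f) p := by
  have h1 : ContDiffOn ℝ (⊤ : ℕ∞) (fun q => fderiv ℝ f q) U :=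
    hf.fderiv_of_isOpen hU (by exact_mod_cast le_top)
  have h2 : ContDiffOn ℝ (⊤ : ℕ∞) (pdx f) U := h1.clm_apply contDiffOn_const
  exact (h2.differentiableOn (by simp)).differentiableAt (hU.mem_nhds hp)

private lemma fderiv_comb {a b : ℝ} {f g : ℝ × ℝ → ℝ} {p : ℝ × ℝ} (d : ℝ × ℝ)
    (hf : DifferentiableAt ℝ f p) (hg : DifferentiableAt ℝ g p) :
    fderiv ℝ (fun q => a * f q + b * g q) p d
      = a * fderiv ℝ f p d + b * fderiv ℝ g p d := by
  rw [fderiv_fun_add (hf.const_mul a) (hg.const_mul b)]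
  simp [fderiv_const_mul, hf, hg]

private lemma fderiv_prod_form {c : ℝ} {f g : ℝ × ℝ → ℝ} {p : ℝ × ℝ} (d : ℝ × ℝ)
    (hf : DifferentiableAt ℝ f p) (hg : DifferentiableAt ℝ g p) :
    fderiv ℝ (fun q => c - 2 * f q * g q) p d
      = -(2 * (fderiv ℝ f p d * g p + f p * fderiv ℝ g p d)) := by
  have h : DifferentiableAt ℝ (fun q => 2 * f q * g q) p := (hf.const_mul 2).mul hg
  rw [fderiv_fun_sub (differentiableAt_const c) h]
  rw [fderiv_fun_mul (hf.const_mul 2) hg, fderiv_const_mul hf]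
  simp; ring

/-- The Pohlmeyer–Lund–Regge type system `u_xt = 2uv·u_x − u`, `v_xt = −2uv·v_x − v`
describes pseudospherical surfaces. -/
theorem plr_describes_pss (η : ℝ) (hη : η ≠ 0) (U : Set (ℝ × ℝ)) (hU : IsOpen U)
    (u v : ℝ × ℝ → ℝ)
    (hu : ContDiffOn ℝ (⊤ : ℕ∞) u U) (hv : ContDiffOn ℝ (⊤ : ℕ∞) v U)
    (heq1 : ∀ p ∈ U, pdt (pdx u) p = 2 * u p * v p * pdx u p - u p)
    (heq2 : ∀ p ∈ U, pdt (pdx v) p = -(2 * u p * v p) * pdx v p - v p) :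
    StructEqs 1 U
      (fun q => η * (pdx u q + pdx v q))
      (fun q => 1 / η * (v q - u q))
      (fun _ => η ^ 2)
      (fun q => -(1 / η ^ 2) - 2 * u q * v q)
      (fun q => η * (pdx u q - pdx v q))
      (fun q => -(1 / η) * (u q + v q)) := by
  intro p hp
  have hup : DifferentiableAt ℝ u p :=
    (hu.differentiableOn (by simp)).differentiableAt (hU.mem_nhds hp)
  have hvp : DifferentiableAt ℝ v p :=
    (hv.differentiableOn (by simp)).differentiableAt (hU.mem_nhds hp)
  have huxp : DifferentiableAt ℝ (pdx u) p := diffAt_pdx hU hu hp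
  have hvxp : DifferentiableAt ℝ (pdx v) p := diffAt_pdx hU hv hp
  -- Time derivatives of the first column
  have hF11 : pdt (fun q => η * (pdx u q + pdx v q)) p
      = η * pdt (pdx u) p + η * pdt (pdx v) p := by
    have : (fun q => η * (pdx u q + pdx v q)) = fun q => η * pdx u q + η * pdx v q := by
      funext q; ring
    rw [this]; exact fderiv_comb (0, 1) huxp hvxp
  have hF31 : pdt (fun q => η * (pdx u q - pdx v q)) p
      = η * pdt (pdx u) p + (-η) * pdt (pdx v) p := by
    have : (fun q => η * (pdx u q - pdx v q)) = fun q => η * pdx u q + (-η) * pdx v q := by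
      funext q; ring
    rw [this]; exact fderiv_comb (0, 1) huxp hvxp
  have hF21 : pdt (fun _ : ℝ × ℝ => η ^ 2) p = 0 := by
    simp [pdt, fderiv_const]
  -- Space derivatives of the second column
  have hF12 : pdx (fun q => 1 / η * (v q - u q)) p
      = 1 / η * pdx v p + (-(1 / η)) * pdx u p := by
    have : (fun q => 1 / η * (v q - u q)) = fun q => 1 / η * v q + (-(1 / η)) * u q := by
      funext q; ring
    rw [this]; exact fderiv_comb (1, 0) hvp hup
  have hF32 : pdx (fun q => -(1 / η) * (u q + v q)) p
      = -(1 / η) * pdx u p + (-(1 / η)) * pdx v p := by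
    have : (fun q => -(1 / η) * (u q + v q)) = fun q => -(1 / η) * u q + (-(1 / η)) * v q := by
      funext q; ring
    rw [this]; exact fderiv_comb (1, 0) hup hvp
  have hF22 : pdx (fun q => -(1 / η ^ 2) - 2 * u q * v q) p
      = -(2 * (pdx u p * v p + u p * pdx v p)) :=
    fderiv_prod_form (1, 0) hup hvp
  refine ⟨?_, ?_, ?_⟩
  · rw [hF11, hF12, heq1 p hp, heq2 p hp]; field_simp; ring
  · rw [hF21, hF22]; field_simp; ring
  · rw [hF31, hF32, heq1 p hp, heq2 p hp]; field_simp; ring
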